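/- Let P be a shortest solution path with vertices u, v as the first and second vertices in the first layer L_p containing more than one vertex of P, x the (k+1)-st vertex of the subpath P_{u,v}, and suppose P' is any (u,x)-path of length at most k contained in layers of index ≥ p that is disjoint from the subpath P_{y,z} (the last min{k+1,|V(P_{x,v})|} vertices of P_{u,v} together with the first min{2k+1,|V(P_{v,t})|} vertices of P_{v,t}). Then P' is disjoint from the entire subpath P_{x,t} of P except at the vertex x. -/

import Mathlib

variable {V : Type*}

/-- `l` is a (nonempty) directed walk in the digraph `G`. -/
def IsWalk (G : V → V → Prop) : List V → Prop
  | [] => False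
  | [_] => True
  | a :: b :: l => G a b ∧ IsWalk G (b :: l)

/-- `l` is a simple directed path in `G`. -/
def IsPath (G : V → V → Prop) (l : List V) : Prop := IsWalk G l ∧ l.Nodup

/-- `l` is a walk from `s` to `t` in `G`. -/
def IsWalkFrom (G : V → V → Prop) (s t : V) (l : List V) : Prop :=
  IsWalk G l ∧ l.head? = some s ∧ l.getLast? = some t

/-- `l` is a simple path from `s` to `t` in `G`. -/
def IsPathFrom (G : V → V → Prop) (s t : V) (l : List V) : Prop :=
  IsPath G l ∧ l.head? = some s ∧ l.getLast? = some t

/-- The length (number of edges) of a path given as a vertex list. -/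
def pathLen (l : List V) : ℕ := l.length - 1

/-- Directed shortest-path distance (`⊤` if unreachable). -/
noncomputable def ddist (G : V → V → Prop) (s t : V) : ℕ∞ :=
  sInf {n : ℕ∞ | ∃ l, IsPathFrom G s t l ∧ (pathLen l : ℕ∞) = n}


section Aux
variable {G : V → V → Prop}

lemma isWalk_iff : ∀ {l : List V}, IsWalk G l ↔ l ≠ [] ∧ l.IsChain G
  | [] => by simp [IsWalk]
  | [a] => by simp [IsWalk]
  | a :: b :: l => by
    rw [IsWalk, isWalk_iff (l := b :: l)]
    simp [List.isChain_cons_cons, and_assoc]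

lemma IsWalk.ne_nil {l : List V} (h : IsWalk G l) : l ≠ [] := (isWalk_iff.1 h).1

lemma IsWalk.chain' {l : List V} (h : IsWalk G l) : l.IsChain G := (isWalk_iff.1 h).2

lemma IsWalkFrom.append {a b c : V} {l₁ l₂ : List V} (h₁ : IsWalkFrom G a b l₁)
    (h₂ : IsWalkFrom G b c l₂) :
    IsWalkFrom G a c (l₁ ++ l₂.tail) ∧ (l₁ ++ l₂.tail).length + 1 = l₁.length + l₂.length := by
  obtain ⟨hw₁, hh₁, hl₁⟩ := h₁
  obtain ⟨hw₂, hh₂, hl₂⟩ := h₂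
  have hne₁ : l₁ ≠ [] := hw₁.ne_nil
  obtain ⟨m, rfl⟩ : ∃ m, l₂ = b :: m := by
    cases l₂ with
    | nil => simp at hh₂
    | cons x m =>
      simp only [List.head?_cons, Option.some.injEq] at hh₂
      exact ⟨m, by rw [hh₂]⟩
  have hchain : (l₁ ++ m).IsChain G := by
    rw [List.isChain_append]
    rcases List.isChain_cons.1 hw₂.chain' with ⟨hb, hm⟩
    refine ⟨hw₁.chain', hm, ?_⟩
    intro x hx y hy
    rw [hl₁] at hx
    obtain rfl : b = x := by simpa using hx
    exact hb y hy
  have hwalk : IsWalk G (l₁ ++ m) := isWalk_iff.2 ⟨by simp [hne₁], hchain⟩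
  refine ⟨⟨hwalk, ?_, ?_⟩, by simp; omega⟩
  · rw [List.head?_append, hh₁]; rfl
  · rcases eq_or_ne m [] with rfl | hm
    · simp only [List.tail_cons, List.append_nil, hl₁]
      simpa using hl₂
    · have : (b :: m).getLast? = m.getLast? := by
        cases m with
        | nil => simp at hm
        | cons y l => simp [List.getLast?]
      rw [this] at hl₂
      rw [List.tail_cons, List.getLast?_append, hl₂]; rfl
lemma shorten {l : List V} (hw : IsWalk G l) (hd : ¬ l.Nodup) :
    ∃ m, IsWalk G m ∧ m.length < l.length ∧ m.head? = l.head? ∧ m.getLast? = l.getLast? := by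
  rw [List.nodup_iff_injective_get] at hd
  simp only [Function.Injective, not_forall] at hd
  obtain ⟨i, j, hij, hne⟩ := hd
  wlog hlt : (i : ℕ) < (j : ℕ) generalizing i j
  · exact this j i hij.symm (Ne.symm hne) (by have := Fin.val_ne_of_ne hne; omega)
  clear hne
  refine ⟨l.take (i + 1) ++ l.drop (j + 1), ?_, ?_, ?_, ?_⟩
  · refine isWalk_iff.2 ⟨?_, ?_⟩
    · have hi := i.2
      cases l with
      | nil => simp at hi
      | cons a l' => simp [List.take_succ_cons]
    rw [List.isChain_append]
    refine ⟨hw.chain'.take _, hw.chain'.drop _, ?_⟩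
    intro x hx y hy
    have hi1 : (i : ℕ) + 1 ≤ l.length := i.2
    have hjlt : (j:ℕ) + 1 < l.length := by
      by_contra hcon
      push_neg at hcon
      rw [List.drop_eq_nil_of_le (by omega)] at hy
      simp at hy
    have hx' : x = l.get i := by
      rw [List.getLast?_eq_getElem?] at hx
      simp only [List.length_take, min_eq_left hi1, Nat.add_sub_cancel, List.getElem?_take,
        Nat.lt_add_one, if_true] at hx
      rw [List.getElem?_eq_getElem i.2] at hx
      simp only [Option.mem_def, Option.some.injEq] at hx
      simp [List.get_eq_getElem, hx]
    have hy' : y = l.get ⟨(j : ℕ) + 1, hjlt⟩ := by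
      rw [List.head?_drop] at hy
      rw [List.getElem?_eq_getElem hjlt] at hy
      simp only [List.get_eq_getElem]
      simpa using hy.symm
    rw [hx', hij, hy']
    have := List.isChain_iff_getElem.1 hw.chain' (j:ℕ) (by omega)
    simpa [List.get_eq_getElem] using this
  · have hi := i.2; have hj := j.2
    rw [List.length_append, List.length_take, List.length_drop]
    omega
  · cases l with
    | nil => exact absurd i.2 (by simp)
    | cons a l' => simp [List.take_succ_cons, List.head?_append]
  · have hj1 := j.2
    have hgd : ∀ n, n < l.length → (l.drop n).getLast? = l.getLast? := by
      intro n hn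
      rw [List.getLast?_eq_getElem?, List.getLast?_eq_getElem?, List.length_drop,
        List.getElem?_drop]
      congr 1
      omega
    rcases eq_or_lt_of_le (Nat.succ_le_of_lt hj1) with heq | hlt2
    · rw [List.drop_eq_nil_of_le (le_of_eq heq.symm), List.append_nil,
        List.getLast?_eq_getElem?, List.getLast?_eq_getElem?]
      have hi1 : (i:ℕ) + 1 ≤ l.length := i.2
      rw [List.length_take, min_eq_left hi1, Nat.add_sub_cancel, List.getElem?_take]
      simp only [Nat.lt_add_one, if_true]
      rw [List.getElem?_eq_getElem i.2, List.getElem?_eq_getElem (by omega : l.length - 1 < l.length)]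
      have : l.length - 1 = (j:ℕ) := by omega
      simp only [this]
      simpa [List.get_eq_getElem] using hij
    · rw [List.getLast?_append, hgd _ hlt2]
      cases hL : l.getLast? with
      | none =>
        rw [List.getLast?_eq_none_iff] at hL
        exact absurd i.2 (by simp [hL])
      | some z => rfl

lemma walk_to_path_aux : ∀ (n : ℕ) (l : List V), l.length ≤ n → IsWalk G l →
    ∃ m, IsWalk G m ∧ m.Nodup ∧ m.head? = l.head? ∧ m.getLast? = l.getLast? ∧
      m.length ≤ l.length := by
  intro n
  induction n with
  | zero => intro l hl hw; exact absurd hw.ne_nil (by simpa [List.length_eq_zero_iff] using hl)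
  | succ n ih =>
    intro l hl hw
    by_cases hnd : l.Nodup
    · exact ⟨l, hw, hnd, rfl, rfl, le_rfl⟩
    · obtain ⟨m, hmw, hml, hmh, hmt⟩ := shorten hw hnd
      obtain ⟨m', h1, h2, h3, h4, h5⟩ := ih m (by omega) hmw
      exact ⟨m', h1, h2, h3.trans hmh, h4.trans hmt, by omega⟩

lemma IsWalkFrom.toPath {a b : V} {l : List V} (h : IsWalkFrom G a b l) :
    ∃ m, IsPathFrom G a b m ∧ pathLen m ≤ pathLen l := by
  obtain ⟨hw, hh, ht⟩ := h
  obtain ⟨m, h1, h2, h3, h4, h5⟩ := walk_to_path_aux l.length l le_rfl hw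
  exact ⟨m, ⟨⟨h1, h2⟩, h3.trans hh, h4.trans ht⟩, by unfold pathLen; omega⟩

lemma ddist_le_path {a b : V} {l : List V} (h : IsPathFrom G a b l) :
    ddist G a b ≤ (pathLen l : ℕ∞) := sInf_le ⟨l, h, rfl⟩

lemma ddist_le_walk {a b : V} {l : List V} (h : IsWalkFrom G a b l) :
    ddist G a b ≤ (pathLen l : ℕ∞) := by
  obtain ⟨m, hm, hlen⟩ := h.toPath
  exact (ddist_le_path hm).trans (by exact_mod_cast hlen)

lemma ddist_exists {a b : V} {n : ℕ} (h : ddist G a b = (n : ℕ∞)) :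
    ∃ l, IsPathFrom G a b l ∧ pathLen l = n := by
  classical
  have hne : {m : ℕ∞ | ∃ l, IsPathFrom G a b l ∧ (pathLen l : ℕ∞) = m}.Nonempty := by
    by_contra hcon
    rw [Set.not_nonempty_iff_eq_empty] at hcon
    rw [ddist, hcon, sInf_empty] at h
    exact (by simp : (⊤:ℕ∞) ≠ (n:ℕ∞)) h
  obtain ⟨m, hmS, hmin'⟩ := (wellFounded_lt (α := ℕ∞)).has_min _ hne
  have hsInf : ddist G a b = m :=
    le_antisymm (sInf_le hmS) (le_sInf fun c hc => not_lt.1 (hmin' c hc))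
  obtain ⟨l, hl, hpl⟩ := hmS
  refine ⟨l, hl, ?_⟩
  rw [hsInf.symm.trans h] at hpl
  exact_mod_cast hpl

lemma getD_eq_get {l : List V} {m : ℕ} (hm : m < l.length) (d : V) :
    l.getD m d = l.get ⟨m, hm⟩ := by
  rw [List.getD_eq_getElem?_getD, List.getElem?_eq_getElem hm]
  simp [List.get_eq_getElem]

lemma getLast?_drop' {l : List V} {n : ℕ} (hn : n < l.length) :
    (l.drop n).getLast? = l.getLast? := by
  rw [List.getLast?_eq_getElem?, List.getLast?_eq_getElem?, List.length_drop,
    List.getElem?_drop]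
  congr 1
  omega

lemma getLast?_take' {l : List V} {m : ℕ} (hm : m < l.length) (d : V) :
    (l.take (m+1)).getLast? = some (l.getD m d) := by
  have hm1 : m + 1 ≤ l.length := hm
  rw [List.getLast?_eq_getElem?, List.length_take, min_eq_left hm1, Nat.add_sub_cancel,
    List.getElem?_take, if_pos (Nat.lt_add_one m), List.getElem?_eq_getElem hm,
    getD_eq_get hm d]
  simp [List.get_eq_getElem]

lemma head?_take' {l : List V} {m : ℕ} (hne : l ≠ []) :
    (l.take (m+1)).head? = l.head? := by
  cases l with
  | nil => simp at hne
  | cons a l' => simp [List.take_succ_cons]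

lemma walkFrom_take {l : List V} {sv : V} (hw : IsWalk G l) (hh : l.head? = some sv)
    {m : ℕ} (hm : m < l.length) (d : V) :
    IsWalkFrom G sv (l.getD m d) (l.take (m+1)) := by
  refine ⟨isWalk_iff.2 ⟨?_, hw.chain'.take _⟩, ?_, getLast?_take' hm d⟩
  · have := hw.ne_nil
    cases l with
    | nil => simp at this
    | cons a l' => simp [List.take_succ_cons]
  · rw [head?_take' hw.ne_nil, hh]

lemma walkFrom_drop {l : List V} {tv : V} (hw : IsWalk G l) (ht : l.getLast? = some tv)
    {m : ℕ} (hm : m < l.length) (d : V) :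
    IsWalkFrom G (l.getD m d) tv (l.drop m) := by
  refine ⟨isWalk_iff.2 ⟨?_, hw.chain'.drop _⟩, ?_, by rw [getLast?_drop' hm, ht]⟩
  · intro hcon
    rw [List.drop_eq_nil_iff] at hcon
    omega
  · rw [List.head?_drop, List.getElem?_eq_getElem hm, getD_eq_get hm d]
    simp [List.get_eq_getElem]

lemma ddist_getD_le {l : List V} {sv : V} (hw : IsWalk G l) (hh : l.head? = some sv)
    {m : ℕ} (hm : m < l.length) (d : V) :
    ddist G sv (l.getD m d) ≤ (m : ℕ∞) := by
  have h := ddist_le_walk (walkFrom_take hw hh hm d)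
  have hlen : pathLen (l.take (m+1)) = m := by
    have : m + 1 ≤ l.length := hm
    simp [pathLen, List.length_take, min_eq_left this]
  rwa [hlen] at h

lemma nodup_getD_inj {l : List V} (hnd : l.Nodup) {m n : ℕ} (d : V)
    (hm : m < l.length) (hn : n < l.length) (h : l.getD m d = l.getD n d) : m = n := by
  rw [getD_eq_get hm, getD_eq_get hn] at h
  have := List.nodup_iff_injective_get.1 hnd h
  exact congrArg Fin.val this

lemma getD_mem {l : List V} {m : ℕ} (d : V) (hm : m < l.length) : l.getD m d ∈ l := by
  rw [getD_eq_get hm]; exact List.get_mem ..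

lemma mem_take_idx {l : List V} {n : ℕ} {a : V} (d : V) (h : a ∈ l.take n) :
    ∃ m : ℕ, m < n ∧ m < l.length ∧ a = l.getD m d := by
  obtain ⟨⟨m, hm⟩, hget⟩ := List.mem_iff_get.1 h
  have hlt : m < n ∧ m < l.length := by
    rw [List.length_take] at hm; omega
  refine ⟨m, hlt.1, hlt.2, ?_⟩
  rw [getD_eq_get hlt.2]
  rw [← hget]
  simp [List.get_eq_getElem, List.getElem_take]

lemma mem_drop_idx {l : List V} {n : ℕ} {a : V} (d : V) (h : a ∈ l.drop n) :
    ∃ m : ℕ, n ≤ m ∧ m < l.length ∧ a = l.getD m d := by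
  obtain ⟨⟨m, hm⟩, hget⟩ := List.mem_iff_get.1 h
  have hlt : n + m < l.length := by
    rw [List.length_drop] at hm; omega
  refine ⟨n + m, by omega, hlt, ?_⟩
  rw [getD_eq_get hlt, ← hget]
  simp [List.get_eq_getElem, List.getElem_drop]

lemma getD_zero_of_head? {l : List V} {a : V} (d : V) (h : l.head? = some a) :
    l.getD 0 d = a := by
  cases l with
  | nil => simp at h
  | cons b m => simpa using h

lemma getD_last_of_getLast? {l : List V} {a : V} (d : V) (h : l.getLast? = some a) :
    l.getD (l.length - 1) d = a := by
  have hne : l ≠ [] := by rintro rfl; simp at h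
  have hlen : l.length - 1 < l.length := by
    have := List.length_pos_iff.2 hne; omega
  rw [List.getLast?_eq_getElem?, List.getElem?_eq_getElem hlen] at h
  rw [getD_eq_get hlen]
  simpa [List.get_eq_getElem] using h

lemma IsPathFrom.toWalkFrom {a b : V} {l : List V} (h : IsPathFrom G a b l) :
    IsWalkFrom G a b l := ⟨h.1.1, h.2.1, h.2.2⟩

lemma ddist_nat {a b : V} {m : ℕ} (h : ddist G a b ≤ (m : ℕ∞)) :
    ∃ q : ℕ, q ≤ m ∧ ddist G a b = (q : ℕ∞) := by
  have hne : ddist G a b ≠ ⊤ := ne_top_of_le_ne_top (by simp) h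
  obtain ⟨q, hq⟩ := WithTop.ne_top_iff_exists.1 hne
  refine ⟨q, ?_, hq.symm⟩
  rw [← hq] at h
  exact Nat.cast_le.mp h

lemma getD_take' {l : List V} {n m : ℕ} (d : V) (hm : m < n) (hm' : m < l.length) :
    (l.take n).getD m d = l.getD m d := by
  have h2 : m < (l.take n).length := by rw [List.length_take]; omega
  rw [getD_eq_get h2, getD_eq_get hm']
  simp [List.get_eq_getElem, List.getElem_take]


end Aux

theorem stmt_15 (G : V → V → Prop) (s t : V) (k p : ℕ) (P P' : List V)
    (iu iv ix iy iz : ℕ)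
    (hreach : ∀ w : V, ∃ l, IsPathFrom G s w l)
    (hk : 1 ≤ k)
    (hgap : ∀ Q, IsPathFrom G s t Q → ddist G s t + (k : ℕ∞) ≤ (pathLen Q : ℕ∞) →
      ddist G s t + ((2*k : ℕ) : ℕ∞) ≤ (pathLen Q : ℕ∞))
    (hP : IsPathFrom G s t P)
    (hPsol : ddist G s t + ((2*k : ℕ) : ℕ∞) ≤ (pathLen P : ℕ∞))
    (hmin : ∀ Q, IsPathFrom G s t Q → ddist G s t + ((2*k : ℕ) : ℕ∞) ≤ (pathLen Q : ℕ∞) →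
      pathLen P ≤ pathLen Q)
    (hiu : iu < iv) (hiv : iv < P.length)
    (hu : ddist G s (P.getD iu s) = (p : ℕ∞)) (hv : ddist G s (P.getD iv s) = (p : ℕ∞))
    (hfirst : ∀ m < iu, ddist G s (P.getD m s) ≠ (p : ℕ∞))
    (hsecond : ∀ m, iu < m → m < iv → ddist G s (P.getD m s) ≠ (p : ℕ∞))
    (hpmin : ∀ q : ℕ, q < p →
      ¬ ∃ a ∈ P, ∃ b ∈ P, a ≠ b ∧ ddist G s a = (q : ℕ∞) ∧ ddist G s b = (q : ℕ∞))
    (hix : ix = iu + k) (hxlt : ix < iv)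
    (hiy : iy = iv - (min (k+1) (iv - ix + 1) - 1))
    (hiz : iz = iv + (min (2*k+1) (P.length - iv) - 1))
    (hP' : IsPathFrom G (P.getD iu s) (P.getD ix s) P')
    (hP'len : pathLen P' ≤ k)
    (hP'layer : ∀ w ∈ P', (p : ℕ∞) ≤ ddist G s w)
    (hP'disj : ∀ w ∈ P', ∀ j, iy ≤ j → j ≤ iz → w ≠ P.getD ix s → w ≠ P.getD j s) :
    ∀ w ∈ P', (∃ j, ix ≤ j ∧ j < P.length ∧ w = P.getD j s) → w = P.getD ix s := by
  classical
  obtain ⟨⟨hPw, hPnd⟩, hPh, hPt⟩ := hP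
  obtain ⟨⟨hP'w, hP'nd⟩, hP'h, hP't⟩ := hP'
  have hiuP : iu < P.length := lt_trans hiu hiv
  have hixP : ix < P.length := lt_trans hxlt hiv
  have hinj : ∀ {m n : ℕ}, m < P.length → n < P.length → P.getD m s = P.getD n s → m = n :=
    fun hm hn h => nodup_getD_inj hPnd s hm hn h
  obtain ⟨D, hDle, hD⟩ := ddist_nat (ddist_le_path (⟨⟨hPw, hPnd⟩, hPh, hPt⟩ :
    IsPathFrom G s t P))
  have hgapN : ∀ Q, IsPathFrom G s t Q → D + k ≤ pathLen Q → D + 2*k ≤ pathLen Q := by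
    intro Q hQ h
    have h2 := hgap Q hQ (by rw [hD]; exact_mod_cast h)
    rw [hD] at h2; exact_mod_cast h2
  have hminN : ∀ Q, IsPathFrom G s t Q → D + 2*k ≤ pathLen Q → pathLen P ≤ pathLen Q := by
    intro Q hQ h
    exact hmin Q hQ (by rw [hD]; exact_mod_cast h)
  have hDpath : ∀ Q, IsPathFrom G s t Q → D ≤ pathLen Q := by
    intro Q hQ
    have h2 := ddist_le_path hQ; rw [hD] at h2; exact_mod_cast h2
  have hforb : ∀ Q, IsPathFrom G s t Q → pathLen Q < pathLen P → pathLen Q < D + k := by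
    intro Q hQ hlt
    by_contra hge
    push_neg at hge
    have := hminN Q hQ (hgapN Q hQ hge)
    omega
  -- distances along the prefix of P are exact
  have hdist_prefix : ∀ m, m ≤ iu → ddist G s (P.getD m s) = (m : ℕ∞) := by
    intro m
    induction m using Nat.strong_induction_on with
    | _ m ih =>
      intro hmiu
      have hmP : m < P.length := by omega
      obtain ⟨q, hqle, hq⟩ := ddist_nat (ddist_getD_le hPw hPh hmP s)
      rcases eq_or_lt_of_le hqle with rfl | hqlt
      · exact hq
      exfalso
      have hq' : ddist G s (P.getD q s) = (q : ℕ∞) := ih q hqlt (by omega)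
      rcases lt_trichotomy q p with h1 | rfl | h1
      · exact hpmin q h1 ⟨_, getD_mem s (by omega), _, getD_mem s hmP,
          fun hc => by have := hinj (by omega) hmP hc; omega, hq', hq⟩
      · exact hfirst q (by omega) hq'
      · exact hfirst p (by omega) (ih p (by omega) (by omega))
  have hpu : iu = p := by
    have h2 := (hdist_prefix iu le_rfl).symm.trans hu
    exact_mod_cast h2
  -- shortest path to v, and its first meeting point with the suffix of P
  obtain ⟨g, hgPath, hglen⟩ := ddist_exists hv
  obtain ⟨⟨hgw, hgnd⟩, hgh, hgt⟩ := hgPath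
  have hgne := hgw.ne_nil
  have hglen' : g.length = p + 1 := by
    have := List.length_pos_iff.2 hgne
    unfold pathLen at hglen; omega
  have hglast : g.getD p s = P.getD iv s := by
    have h2 := getD_last_of_getLast? s hgt
    rw [hglen'] at h2
    simpa using h2
  have hHitp : p ∈ {e | ∃ m', iv ≤ m' ∧ m' < P.length ∧ g.getD e s = P.getD m' s} :=
    ⟨iv, le_rfl, hiv, hglast⟩
  obtain ⟨m0, hm0iv, hm0P, hgm0⟩ := Nat.sInf_mem (⟨p, hHitp⟩ : Set.Nonempty _)
  have he0le : sInf {e | ∃ m', iv ≤ m' ∧ m' < P.length ∧ g.getD e s = P.getD m' s} ≤ p :=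
    Nat.sInf_le hHitp
  set e0 := sInf {e | ∃ m', iv ≤ m' ∧ m' < P.length ∧ g.getD e s = P.getD m' s} with he0def
  have he0min : ∀ e < e0, ∀ m', iv ≤ m' → m' < P.length → g.getD e s ≠ P.getD m' s := by
    intro e he m' h1 h2 hc
    exact Nat.notMem_of_lt_sInf he ⟨m', h1, h2, hc⟩
  have he0g : e0 < g.length := by omega
  have he0dist : ddist G s (g.getD e0 s) = (e0 : ℕ∞) := by
    obtain ⟨q, hqle, hq⟩ := ddist_nat (ddist_getD_le hgw hgh he0g s)
    rcases eq_or_lt_of_le hqle with rfl | hqlt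
    · exact hq
    exfalso
    obtain ⟨h, hhP, hhlen⟩ := ddist_exists hq
    have hdropg := walkFrom_drop hgw hgt he0g s
    obtain ⟨hRw, hRlen⟩ := IsWalkFrom.append hhP.toWalkFrom hdropg
    have hle2 := ddist_le_walk hRw
    rw [hv] at hle2
    have hlen1 : (g.drop e0).length = g.length - e0 := List.length_drop ..
    have hhne : h ≠ [] := hhP.1.1.ne_nil
    have hhlen' : h.length = q + 1 := by
      have := List.length_pos_iff.2 hhne
      unfold pathLen at hhlen; omega
    have hfin : p ≤ pathLen (h ++ (g.drop e0).tail) := by exact_mod_cast hle2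
    unfold pathLen at hfin
    omega
  have he0p : e0 = p := by
    rcases eq_or_lt_of_le he0le with h | hlt
    · exact h
    exfalso
    refine hpmin e0 (by omega) ⟨P.getD e0 s, getD_mem s (by omega), P.getD m0 s,
      getD_mem s hm0P, fun hc => by have := hinj (by omega) hm0P hc; omega,
      hdist_prefix e0 (by omega), ?_⟩
    rw [← hgm0]; exact he0dist
  -- the path R through v
  have hdropPv := walkFrom_drop hPw hPt hiv s
  obtain ⟨hRwf, hRlen⟩ := IsWalkFrom.append (⟨hgw, hgh, hgt⟩ : IsWalkFrom G s (P.getD iv s) g)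
    hdropPv
  have hRnd : (g ++ (P.drop iv).tail).Nodup := by
    rw [List.nodup_append]
    refine ⟨hgnd, ?_, ?_⟩
    · rw [List.tail_drop]; exact hPnd.sublist (List.drop_sublist ..)
    · intro a hag b hadrop hab; subst hab
      rw [List.tail_drop] at hadrop
      obtain ⟨m', hm'ge, hm'P, ham'⟩ := mem_drop_idx s hadrop
      obtain ⟨⟨e, heg⟩, hge⟩ := List.mem_iff_get.1 hag
      have hae : g.getD e s = P.getD m' s := by
        rw [getD_eq_get heg, hge, ham']
      have hele : e ≤ p := by have := heg; omega
      rcases eq_or_lt_of_le hele with rfl | helt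
      · rw [hglast] at hae
        have := hinj hiv hm'P hae
        omega
      · exact he0min e (by omega) m' (by omega) hm'P hae
  have hRpath : IsPathFrom G s t (g ++ (P.drop iv).tail) :=
    ⟨⟨hRwf.1, hRnd⟩, hRwf.2.1, hRwf.2.2⟩
  have hlenDropv : (P.drop iv).length = P.length - iv := List.length_drop ..
  have hRpl : pathLen (g ++ (P.drop iv).tail) = p + (P.length - iv) - 1 := by
    unfold pathLen; omega
  have hclaim2 : D ≤ p + (P.length - iv) - 1 := by
    have := hDpath _ hRpath; omega
  have hclaim1 : p + (P.length - iv) - 1 < D + k := by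
    have := hforb _ hRpath (by unfold pathLen; omega)
    omega
  -- main argument
  intro w hwmem hex
  by_contra hwx
  obtain ⟨j, hjge, hjlt, hjw⟩ := hex
  have hjne : j ≠ ix := fun h => hwx (by rw [hjw, h])
  have hjgt : ix < j := lt_of_le_of_ne hjge (Ne.symm hjne)
  have hP'ne := hP'w.ne_nil
  have hP'pos : 0 < P'.length := List.length_pos_iff.2 hP'ne
  have hP'last : P'.getD (P'.length - 1) s = P.getD ix s := getD_last_of_getLast? s hP't
  obtain ⟨⟨dw, hdw⟩, hdwget⟩ := List.mem_iff_get.1 hwmem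
  have hTne : dw ∈ {d | d < P'.length ∧ ∃ j', ix < j' ∧ j' < P.length ∧
      P'.getD d s = P.getD j' s} :=
    ⟨hdw, j, hjgt, hjlt, by rw [getD_eq_get hdw, hdwget, hjw]⟩
  obtain ⟨hd0P', j0, hj0gt, hj0P, hw0⟩ := Nat.sInf_mem (⟨dw, hTne⟩ : Set.Nonempty _)
  have hd0le : ∀ d ∈ {d | d < P'.length ∧ ∃ j', ix < j' ∧ j' < P.length ∧
      P'.getD d s = P.getD j' s},
      sInf {d | d < P'.length ∧ ∃ j', ix < j' ∧ j' < P.length ∧ P'.getD d s = P.getD j' s} ≤ d :=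
    fun d hd => Nat.sInf_le hd
  set d0 := sInf {d | d < P'.length ∧ ∃ j', ix < j' ∧ j' < P.length ∧
      P'.getD d s = P.getD j' s} with hd0def
  have hd0last : d0 ≠ P'.length - 1 := by
    intro h
    rw [h, hP'last] at hw0
    have := hinj hixP hj0P hw0
    omega
  have hd0lt : d0 < P'.length - 1 := by omega
  have hd0k : d0 + 1 ≤ k := by unfold pathLen at hP'len; omega
  -- assemble the shortcut path Q
  have hA := walkFrom_take hPw hPh hiuP s
  have hB := walkFrom_take hP'w hP'h hd0P' s
  have hC := walkFrom_drop hPw hPt hj0P s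
  rw [← hw0] at hC
  obtain ⟨hAB, hABlen⟩ := IsWalkFrom.append hA hB
  obtain ⟨hQwf, hQlen⟩ := IsWalkFrom.append hAB hC
  have hlenA : (P.take (iu+1)).length = iu + 1 := by rw [List.length_take]; omega
  have hlenB : (P'.take (d0+1)).length = d0 + 1 := by rw [List.length_take]; omega
  have hlenC : (P.drop j0).length = P.length - j0 := List.length_drop ..
  -- membership description of the middle part
  have hmemB' : ∀ a ∈ (P'.take (d0+1)).tail,
      ∃ m, 1 ≤ m ∧ m ≤ d0 ∧ m < P'.length ∧ a = P'.getD m s := by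
    intro a ha
    rw [← List.drop_one] at ha
    obtain ⟨m, hm1, hm2, ham⟩ := mem_drop_idx s ha
    rw [hlenB] at hm2
    refine ⟨m, hm1, by omega, by omega, ?_⟩
    rw [ham, getD_take' s (by omega) (by omega)]
  have hQnd : (P.take (iu+1) ++ (P'.take (d0+1)).tail ++ (P.drop j0).tail).Nodup := by
    rw [List.nodup_append, List.nodup_append]
    refine ⟨⟨hPnd.sublist (List.take_sublist ..),
      (hP'nd.sublist (List.take_sublist ..)).sublist (List.tail_sublist ..), ?_⟩, ?_, ?_⟩
    · -- A disjoint from B'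
      intro a haA b haB hab; subst hab
      obtain ⟨m, hm1, hm2, ham⟩ := mem_take_idx s haA
      obtain ⟨m1, hm11, hm12, hm13, ham1⟩ := hmemB' a haB
      have haP' : a ∈ P' := ham1 ▸ getD_mem s hm13
      have hge := hP'layer a haP'
      rw [ham, hdist_prefix m (by omega)] at hge
      have hpm : p ≤ m := by exact_mod_cast hge
      have hu0 : P'.getD 0 s = a := by
        rw [getD_zero_of_head? s hP'h, ham]
        congr 1
        omega
      have := nodup_getD_inj hP'nd s (by omega) hm13 (hu0.trans ham1)
      omega
    · -- C' nodup
      rw [List.tail_drop]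
      exact hPnd.sublist (List.drop_sublist ..)
    · -- A ++ B' disjoint from C'
      rw [List.tail_drop]
      intro a haAB b haC hab; subst hab
      obtain ⟨m', hm'ge, hm'P, ham'⟩ := mem_drop_idx s haC
      rcases List.mem_append.1 haAB with haA | haB
      · obtain ⟨m, hm1, hm2, ham⟩ := mem_take_idx s haA
        have := hinj hm2 hm'P (ham.symm.trans ham')
        omega
      · obtain ⟨m1, hm11, hm12, hm13, ham1⟩ := hmemB' a haB
        have hm1T : m1 ∈ {d | d < P'.length ∧ ∃ j', ix < j' ∧ j' < P.length ∧
            P'.getD d s = P.getD j' s} :=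
          ⟨hm13, m', by omega, hm'P, ham1.symm.trans ham'⟩
        have hm1d0 : m1 = d0 := le_antisymm (by omega) (hd0le m1 hm1T)
        rw [hm1d0] at ham1
        have : j0 = m' := hinj hj0P hm'P ((hw0.symm.trans ham1.symm).trans ham')
        omega
  have hQpath : IsPathFrom G s t (P.take (iu+1) ++ (P'.take (d0+1)).tail ++ (P.drop j0).tail) :=
    ⟨⟨hQwf.1, hQnd⟩, hQwf.2.1, hQwf.2.2⟩
  have hQpl : pathLen (P.take (iu+1) ++ (P'.take (d0+1)).tail ++ (P.drop j0).tail) =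
      iu + d0 + (P.length - j0) - 1 := by
    unfold pathLen; omega
  -- the meeting point avoids the protected window
  have hwin : j0 < iy ∨ iz < j0 := by
    by_contra hcon
    push_neg at hcon
    refine hP'disj (P'.getD d0 s) (getD_mem s hd0P') j0 hcon.1 hcon.2 ?_ hw0
    intro hc
    rw [hw0] at hc
    have := hinj hj0P hixP hc
    omega
  rcases hwin with hcase | hcase
  · -- j0 before the window: a forbidden middle-length path
    have hiv' : j0 + k + 1 ≤ iv := by omega
    have h1 := hminN _ hQpath (hgapN _ hQpath (by omega))
    unfold pathLen at h1 hDle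
    omega
  · -- j0 after the window: a path shorter than the distance
    have hiv2 : iv + 2*k + 1 ≤ j0 := by omega
    have hD2 := hDpath _ hQpath
    omega
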